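/- For any real λ ≠ 0, there exists a transcendental real number α > 1 such that (λα^n) is not uniformly distributed modulo 1. -/
import Mathlib


open Filter

/-- A sequence of real numbers is uniformly distributed modulo 1 (Weyl's criterion). -/
def UDMod1 (x : ℕ → ℝ) : Prop :=
  ∀ h : ℤ, h ≠ 0 →
    Tendsto (fun N : ℕ => (N : ℂ)⁻¹ * ∑ n ∈ Finset.Icc 1 N,
      Complex.exp (2 * Real.pi * Complex.I * h * x n)) atTop (nhds 0)

/-- The sequence of integer targets in the nested-interval construction. -/
noncomputable def MSeq (μ : ℝ) (g : ℕ → Bool) : ℕ → ℤ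
  | 0 => ⌈12 * μ⌉ + 1
  | k + 1 =>
      ⌈μ * (((((MSeq μ g k : ℤ) : ℝ) + 1/8) / μ) ^ (((k+1 : ℕ) : ℝ)⁻¹)) ^ (k + 2)⌉ +
        (bif g k then 1 else 0)

noncomputable def aSeq (μ : ℝ) (g : ℕ → Bool) (k : ℕ) : ℝ :=
  ((((MSeq μ g k : ℤ) : ℝ) + 1/8) / μ) ^ (((k+1 : ℕ) : ℝ)⁻¹)

noncomputable def bSeq (μ : ℝ) (g : ℕ → Bool) (k : ℕ) : ℝ :=
  ((((MSeq μ g k : ℤ) : ℝ) + 3/8) / μ) ^ (((k+1 : ℕ) : ℝ)⁻¹)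

lemma MSeq_succ (μ : ℝ) (g : ℕ → Bool) (k : ℕ) :
    MSeq μ g (k+1) = ⌈μ * (aSeq μ g k) ^ (k + 2)⌉ + (bif g k then 1 else 0) := rfl

lemma MSeq_congr (μ : ℝ) (g g' : ℕ → Bool) (k : ℕ) (h : ∀ j < k, g j = g' j) :
    MSeq μ g k = MSeq μ g' k := by
  induction k with
  | zero => rfl
  | succ k ih =>
      have hk : MSeq μ g k = MSeq μ g' k := ih (fun j hj => h j (Nat.lt_succ_of_lt hj))
      rw [MSeq_succ, MSeq_succ, aSeq, aSeq, hk, h k (Nat.lt_succ_self k)]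

lemma inv_main (μ : ℝ) (hμ : 0 < μ) (g : ℕ → Bool) (k : ℕ) :
    1 ≤ MSeq μ g k ∧ 12 ≤ aSeq μ g k := by
  induction k with
  | zero =>
      constructor
      · have : (0:ℤ) ≤ ⌈12 * μ⌉ := Int.ceil_nonneg (by positivity)
        show 1 ≤ ⌈12 * μ⌉ + 1
        omega
      · have h1 : (12 : ℝ) * μ ≤ ((⌈12 * μ⌉ : ℤ) : ℝ) + 1 := by
          have := Int.le_ceil (12 * μ)
          linarith
        have hM : ((MSeq μ g 0 : ℤ) : ℝ) = ((⌈12 * μ⌉ : ℤ) : ℝ) + 1 := by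
          show ((⌈12*μ⌉ + 1 : ℤ) : ℝ) = _
          push_cast; ring
        rw [aSeq, hM]
        have : (12 : ℝ) ≤ (((⌈12 * μ⌉ : ℤ) : ℝ) + 1 + 1/8) / μ := by
          rw [le_div_iff₀ hμ]; linarith
        calc (12:ℝ) ≤ (((⌈12 * μ⌉ : ℤ) : ℝ) + 1 + 1/8) / μ := this
          _ = ((((⌈12 * μ⌉ : ℤ) : ℝ) + 1 + 1/8) / μ) ^ (((0+1 : ℕ) : ℝ)⁻¹) := by
              norm_num
  | succ k ih =>
      obtain ⟨hM, ha⟩ := ih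
      have ha0 : (0:ℝ) < aSeq μ g k := by linarith
      set c : ℝ := μ * (aSeq μ g k) ^ (k + 2) with hc
      have hc0 : 0 < c := by positivity
      have hMk : MSeq μ g (k+1) = ⌈c⌉ + (bif g k then 1 else 0) := MSeq_succ μ g k
      have hbif : (0:ℤ) ≤ (bif g k then 1 else 0) := by cases g k <;> simp
      have hceil : (1:ℤ) ≤ ⌈c⌉ := by
        have := Int.ceil_pos.2 hc0; omega
      constructor
      · rw [hMk]; omega
      · -- aSeq (k+1) ≥ aSeq k ≥ 12
        have hle : c ≤ ((MSeq μ g (k+1) : ℤ) : ℝ) + 1/8 := by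
          have h1 : c ≤ ((⌈c⌉ : ℤ) : ℝ) := Int.le_ceil c
          have h2 : ((⌈c⌉ : ℤ) : ℝ) ≤ ((MSeq μ g (k+1) : ℤ) : ℝ) := by
            rw [hMk]; push_cast
            have : (0:ℝ) ≤ ((bif g k then 1 else 0 : ℤ) : ℝ) := by exact_mod_cast hbif
            linarith
          linarith
        have key : aSeq μ g k ≤ aSeq μ g (k+1) := by
          rw [aSeq]
          have harg : (aSeq μ g k) ^ (k+2) ≤ (((MSeq μ g (k+1) : ℤ) : ℝ) + 1/8) / μ := by
            rw [le_div_iff₀ hμ]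
            calc (aSeq μ g k) ^ (k+2) * μ = c := by rw [hc]; ring
              _ ≤ _ := hle
          calc aSeq μ g k
              = ((aSeq μ g k ^ (k+2)) ^ (((k+2 : ℕ) : ℝ)⁻¹)) :=
                (Real.pow_rpow_inv_natCast ha0.le (by omega)).symm
            _ ≤ ((((MSeq μ g (k+1) : ℤ) : ℝ) + 1/8) / μ) ^ (((k+2 : ℕ) : ℝ)⁻¹) :=
                Real.rpow_le_rpow (by positivity) harg (by positivity)
            _ = ((((MSeq μ g (k+1) : ℤ) : ℝ) + 1/8) / μ) ^ (((k+1+1 : ℕ) : ℝ)⁻¹) := rfl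
        linarith

lemma apow (μ : ℝ) (hμ : 0 < μ) (g : ℕ → Bool) (k : ℕ) :
    μ * (aSeq μ g k) ^ (k+1) = ((MSeq μ g k : ℤ) : ℝ) + 1/8 := by
  have hM := (inv_main μ hμ g k).1
  have hpos : (0:ℝ) ≤ (((MSeq μ g k : ℤ) : ℝ) + 1/8) / μ := by
    have : (1:ℝ) ≤ ((MSeq μ g k : ℤ) : ℝ) := by exact_mod_cast hM
    positivity
  rw [aSeq, Real.rpow_inv_natCast_pow hpos (by omega), mul_div_cancel₀ _ (ne_of_gt hμ)]

lemma bpow (μ : ℝ) (hμ : 0 < μ) (g : ℕ → Bool) (k : ℕ) :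
    μ * (bSeq μ g k) ^ (k+1) = ((MSeq μ g k : ℤ) : ℝ) + 3/8 := by
  have hM := (inv_main μ hμ g k).1
  have hpos : (0:ℝ) ≤ (((MSeq μ g k : ℤ) : ℝ) + 3/8) / μ := by
    have : (1:ℝ) ≤ ((MSeq μ g k : ℤ) : ℝ) := by exact_mod_cast hM
    positivity
  rw [bSeq, Real.rpow_inv_natCast_pow hpos (by omega), mul_div_cancel₀ _ (ne_of_gt hμ)]

lemma a_le_b (μ : ℝ) (hμ : 0 < μ) (g : ℕ → Bool) (k : ℕ) :
    aSeq μ g k ≤ bSeq μ g k := by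
  have hM := (inv_main μ hμ g k).1
  have h1 : (1:ℝ) ≤ ((MSeq μ g k : ℤ) : ℝ) := by exact_mod_cast hM
  exact Real.rpow_le_rpow (by positivity) ((div_le_div_iff_of_pos_right hμ).2 (by linarith)) (by positivity)

lemma a_mono (μ : ℝ) (hμ : 0 < μ) (g : ℕ → Bool) (k : ℕ) :
    aSeq μ g k ≤ aSeq μ g (k+1) := by
  -- this was proved inside inv_main; reprove quickly
  obtain ⟨hM, ha⟩ := inv_main μ hμ g k
  have ha0 : (0:ℝ) < aSeq μ g k := by linarith
  set c : ℝ := μ * (aSeq μ g k) ^ (k + 2) with hc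
  have hMk : MSeq μ g (k+1) = ⌈c⌉ + (bif g k then 1 else 0) := MSeq_succ μ g k
  have hbif : (0:ℤ) ≤ (bif g k then 1 else 0) := by cases g k <;> simp
  have hle : c ≤ ((MSeq μ g (k+1) : ℤ) : ℝ) + 1/8 := by
    have h1 : c ≤ ((⌈c⌉ : ℤ) : ℝ) := Int.le_ceil c
    have h2 : ((⌈c⌉ : ℤ) : ℝ) ≤ ((MSeq μ g (k+1) : ℤ) : ℝ) := by
      rw [hMk]; push_cast
      have : (0:ℝ) ≤ ((bif g k then 1 else 0 : ℤ) : ℝ) := by exact_mod_cast hbif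
      linarith
    linarith
  rw [aSeq]
  have harg : (aSeq μ g k) ^ (k+2) ≤ (((MSeq μ g (k+1) : ℤ) : ℝ) + 1/8) / μ := by
    rw [le_div_iff₀ hμ]
    calc (aSeq μ g k) ^ (k+2) * μ = c := by rw [hc]; ring
      _ ≤ _ := hle
  calc aSeq μ g k
      = ((aSeq μ g k ^ (k+2)) ^ (((k+2 : ℕ) : ℝ)⁻¹)) :=
        (Real.pow_rpow_inv_natCast ha0.le (by omega)).symm
    _ ≤ ((((MSeq μ g (k+1) : ℤ) : ℝ) + 1/8) / μ) ^ (((k+2 : ℕ) : ℝ)⁻¹) :=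
        Real.rpow_le_rpow (by positivity) harg (by positivity)
    _ = ((((MSeq μ g (k+1) : ℤ) : ℝ) + 1/8) / μ) ^ (((k+1+1 : ℕ) : ℝ)⁻¹) := rfl

lemma b_anti (μ : ℝ) (hμ : 0 < μ) (g : ℕ → Bool) (k : ℕ) :
    bSeq μ g (k+1) ≤ bSeq μ g k := by
  obtain ⟨hM, ha⟩ := inv_main μ hμ g k
  have hab := a_le_b μ hμ g k
  have ha0 : (0:ℝ) < aSeq μ g k := by linarith
  have hb0 : (0:ℝ) < bSeq μ g k := by linarith
  set a := aSeq μ g k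
  set b := bSeq μ g k
  set c : ℝ := μ * a ^ (k + 2) with hc
  set d : ℝ := μ * b ^ (k + 2) with hd
  -- d - c ≥ a/4 ≥ 3
  have hpowa := apow μ hμ g k
  have hpowb := bpow μ hμ g k
  have hstep : a * (μ * b ^ (k+1) - μ * a ^ (k+1)) ≤ d - c := by
    rw [hd, hc]
    have h1 : a * b ^ (k+1) ≤ b ^ (k+2) := by
      calc a * b ^ (k+1) ≤ b * b ^ (k+1) := by
            apply mul_le_mul_of_nonneg_right hab (by positivity)
        _ = b ^ (k+2) := by ring
    have h2 : a * a ^ (k+1) = a ^ (k+2) := by ring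
    nlinarith [pow_nonneg ha0.le (k+1), pow_nonneg hb0.le (k+1)]
  have hdiff : μ * b ^ (k+1) - μ * a ^ (k+1) = 1/4 := by
    rw [hpowa, hpowb]; ring
  have hdc : 3 ≤ d - c := by
    rw [hdiff] at hstep; linarith
  have hMk : MSeq μ g (k+1) = ⌈c⌉ + (bif g k then 1 else 0) := MSeq_succ μ g k
  have hbif : (bif g k then 1 else 0 : ℤ) ≤ 1 := by cases g k <;> simp
  have hub : ((MSeq μ g (k+1) : ℤ) : ℝ) + 3/8 ≤ d := by
    have h1 : ((⌈c⌉ : ℤ) : ℝ) < c + 1 := Int.ceil_lt_add_one c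
    have h2 : ((MSeq μ g (k+1) : ℤ) : ℝ) ≤ ((⌈c⌉ : ℤ) : ℝ) + 1 := by
      rw [hMk]; push_cast
      have : ((bif g k then 1 else 0 : ℤ) : ℝ) ≤ 1 := by exact_mod_cast hbif
      linarith
    linarith
  have hunf : bSeq μ g (k+1) =
      ((((MSeq μ g (k+1) : ℤ) : ℝ) + 3/8) / μ) ^ (((k+1+1 : ℕ) : ℝ)⁻¹) := rfl
  rw [hunf]
  have harg : (((MSeq μ g (k+1) : ℤ) : ℝ) + 3/8) / μ ≤ b ^ (k+2) := by
    rw [div_le_iff₀ hμ]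
    calc ((MSeq μ g (k+1) : ℤ) : ℝ) + 3/8 ≤ d := hub
      _ = b ^ (k+2) * μ := by rw [hd]; ring
  have hpos : (0:ℝ) ≤ (((MSeq μ g (k+1) : ℤ) : ℝ) + 3/8) / μ := by
    have : (1:ℤ) ≤ MSeq μ g (k+1) := (inv_main μ hμ g (k+1)).1
    have : (1:ℝ) ≤ ((MSeq μ g (k+1) : ℤ) : ℝ) := by exact_mod_cast this
    positivity
  calc ((((MSeq μ g (k+1) : ℤ) : ℝ) + 3/8) / μ) ^ (((k+1+1 : ℕ) : ℝ)⁻¹)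
      ≤ (b ^ (k+2)) ^ (((k+2 : ℕ) : ℝ)⁻¹) :=
        Real.rpow_le_rpow hpos harg (by positivity)
    _ = b := Real.pow_rpow_inv_natCast hb0.le (by omega)

noncomputable def alphaSeq (μ : ℝ) (g : ℕ → Bool) : ℝ := ⨆ k, aSeq μ g k

lemma a_mono' (μ : ℝ) (hμ : 0 < μ) (g : ℕ → Bool) : Monotone (aSeq μ g) :=
  monotone_nat_of_le_succ (a_mono μ hμ g)

lemma b_anti' (μ : ℝ) (hμ : 0 < μ) (g : ℕ → Bool) : Antitone (bSeq μ g) :=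
  antitone_nat_of_succ_le (b_anti μ hμ g)

lemma a_le_b_all (μ : ℝ) (hμ : 0 < μ) (g : ℕ → Bool) (j k : ℕ) :
    aSeq μ g j ≤ bSeq μ g k := by
  rcases le_total j k with h | h
  · exact le_trans (a_mono' μ hμ g h) (a_le_b μ hμ g k)
  · exact le_trans (a_le_b μ hμ g j) (b_anti' μ hμ g h)

lemma alpha_bounds (μ : ℝ) (hμ : 0 < μ) (g : ℕ → Bool) (k : ℕ) :
    aSeq μ g k ≤ alphaSeq μ g ∧ alphaSeq μ g ≤ bSeq μ g k := by
  have hbdd : BddAbove (Set.range (aSeq μ g)) :=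
    ⟨bSeq μ g 0, by rintro x ⟨j, rfl⟩; exact a_le_b_all μ hμ g j 0⟩
  constructor
  · exact le_ciSup hbdd k
  · exact ciSup_le fun j => a_le_b_all μ hμ g j k

lemma alpha_interval (μ : ℝ) (hμ : 0 < μ) (g : ℕ → Bool) (k : ℕ) :
    ((MSeq μ g k : ℤ) : ℝ) + 1/8 ≤ μ * (alphaSeq μ g) ^ (k+1) ∧
      μ * (alphaSeq μ g) ^ (k+1) ≤ ((MSeq μ g k : ℤ) : ℝ) + 3/8 := by
  obtain ⟨h1, h2⟩ := alpha_bounds μ hμ g k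
  have ha0 : (0:ℝ) < aSeq μ g k := by
    have := (inv_main μ hμ g k).2; linarith
  constructor
  · rw [← apow μ hμ g k]
    have := pow_le_pow_left₀ ha0.le h1 (k+1)
    nlinarith
  · rw [← bpow μ hμ g k]
    have h0 : (0:ℝ) ≤ alphaSeq μ g := le_trans ha0.le h1
    have := pow_le_pow_left₀ h0 h2 (k+1)
    nlinarith

lemma alpha_gt_one (μ : ℝ) (hμ : 0 < μ) (g : ℕ → Bool) : 1 < alphaSeq μ g := by
  have := (inv_main μ hμ g 0).2
  have := (alpha_bounds μ hμ g 0).1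
  linarith

lemma alpha_injective (μ : ℝ) (hμ : 0 < μ) : Function.Injective (alphaSeq μ) := by
  intro g g' hgg
  by_contra hne
  have hne' : ∃ n, g n ≠ g' n := by
    by_contra h
    push_neg at h
    exact hne (funext h)
  classical
  let n := Nat.find hne'
  have hn : g n ≠ g' n := Nat.find_spec hne'
  have hmin : ∀ j < n, g j = g' j := fun j hj => by
    by_contra h; exact absurd (Nat.find_le h : n ≤ j) (by omega)
  have hMeq : MSeq μ g n = MSeq μ g' n := MSeq_congr μ g g' n hmin
  have haeq : aSeq μ g n = aSeq μ g' n := by rw [aSeq, aSeq, hMeq]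
  have hMne : MSeq μ g (n+1) ≠ MSeq μ g' (n+1) := by
    rw [MSeq_succ, MSeq_succ, haeq]
    cases hg : g n <;> cases hg' : g' n <;> simp_all
  obtain ⟨l1, l2⟩ := alpha_interval μ hμ g (n+1)
  obtain ⟨l1', l2'⟩ := alpha_interval μ hμ g' (n+1)
  rw [hgg] at l1 l2
  have e1 : ((MSeq μ g (n+1) : ℤ) : ℝ) ≤ ((MSeq μ g' (n+1) : ℤ) : ℝ) + 1/4 := by linarith
  have e2 : ((MSeq μ g' (n+1) : ℤ) : ℝ) ≤ ((MSeq μ g (n+1) : ℤ) : ℝ) + 1/4 := by linarith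
  have : MSeq μ g (n+1) = MSeq μ g' (n+1) := by
    have i1 : MSeq μ g (n+1) ≤ MSeq μ g' (n+1) := by
      have : ((MSeq μ g (n+1) : ℤ) : ℝ) < ((MSeq μ g' (n+1) : ℤ) : ℝ) + 1 := by linarith
      exact_mod_cast Int.lt_add_one_iff.mp (by exact_mod_cast this)
    have i2 : MSeq μ g' (n+1) ≤ MSeq μ g (n+1) := by
      have : ((MSeq μ g' (n+1) : ℤ) : ℝ) < ((MSeq μ g (n+1) : ℤ) : ℝ) + 1 := by linarith
      exact_mod_cast Int.lt_add_one_iff.mp (by exact_mod_cast this)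
    omega
  exact hMne this

lemma sin_bound {t : ℝ} (h1 : 1/8 ≤ t) (h2 : t ≤ 3/8) :
    Real.sqrt 2 / 2 ≤ Real.sin (2 * Real.pi * t) := by
  have hπ := Real.pi_pos
  have : Real.sin (2 * Real.pi * t) = Real.cos (2 * Real.pi * t - Real.pi / 2) :=
    (Real.cos_sub_pi_div_two _).symm
  rw [this, ← Real.cos_abs]
  have habs : |2 * Real.pi * t - Real.pi / 2| ≤ Real.pi / 4 := by
    rw [abs_le]; constructor <;> nlinarith
  calc Real.sqrt 2 / 2 = Real.cos (Real.pi / 4) := Real.cos_pi_div_four.symm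
    _ ≤ Real.cos |2 * Real.pi * t - Real.pi / 2| :=
      Real.cos_le_cos_of_nonneg_of_le_pi (abs_nonneg _) (by linarith) habs

/-- The key property: some transcendental α > 1 with μα^n within [1/8,3/8] mod 1. -/
lemma exists_transcendental_alpha (μ : ℝ) (hμ : 0 < μ) :
    ∃ α : ℝ, 1 < α ∧ Transcendental ℚ α ∧
      ∀ n : ℕ, 1 ≤ n → ∃ m : ℤ, (m : ℝ) + 1/8 ≤ μ * α ^ n ∧ μ * α ^ n ≤ (m : ℝ) + 3/8 := by
  by_contra hcon
  push_neg at hcon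
  have halg : ∀ g : ℕ → Bool, IsAlgebraic ℚ (alphaSeq μ g) := by
    intro g
    by_contra hna
    obtain ⟨n, hn1, hn2⟩ := hcon (alphaSeq μ g) (alpha_gt_one μ hμ g) hna
    obtain ⟨k, rfl⟩ : ∃ k, n = k + 1 := ⟨n - 1, by omega⟩
    obtain ⟨i1, i2⟩ := alpha_interval μ hμ g k
    exact absurd i2 (not_le.2 (hn2 (MSeq μ g k) i1))
  -- all alphaSeq values algebraic ⇒ (ℕ → Bool) countable, contradiction
  have hcount : Set.Countable { x : ℝ | IsAlgebraic ℚ x } := Algebraic.countable ℚ ℝ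
  have : Countable (ℕ → Bool) := by
    have := hcount.to_subtype
    exact Function.Injective.countable
      (f := fun g : ℕ → Bool => (⟨alphaSeq μ g, halg g⟩ : { x : ℝ | IsAlgebraic ℚ x }))
      (fun g g' h => alpha_injective μ hμ (by simpa using congrArg Subtype.val h))
  have h1 := Cardinal.mk_le_aleph0 (α := ℕ → Bool)
  rw [Cardinal.mk_arrow] at h1
  simp at h1
  exact absurd h1 (by simpa using (Cardinal.cantor Cardinal.aleph0).not_ge)

theorem exists_transcendental_badly_distributed (lam : ℝ) (hlam : lam ≠ 0) :
    ∃ α : ℝ, 1 < α ∧ Transcendental ℚ α ∧ ¬ UDMod1 (fun n => lam * α ^ n) := by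
  set μ : ℝ := |lam| with hμdef
  have hμ : 0 < μ := abs_pos.2 hlam
  obtain ⟨α, hα1, hαt, hαm⟩ := exists_transcendental_alpha μ hμ
  refine ⟨α, hα1, hαt, ?_⟩
  intro hud
  set h : ℤ := if 0 < lam then 1 else -1 with hh
  have hne : h ≠ 0 := by rw [hh]; split <;> norm_num
  have hμlam : (h : ℝ) * lam = μ := by
    rw [hh, hμdef]
    rcases lt_trichotomy lam 0 with hl | hl | hl
    · rw [if_neg (by linarith), abs_of_neg hl]; push_cast; ring
    · exact absurd hl hlam
    · rw [if_pos hl, abs_of_pos hl]; push_cast; ring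
  have htend := hud h hne
  -- pass to imaginary parts
  have htendim : Tendsto (fun N : ℕ => ((N : ℂ)⁻¹ * ∑ n ∈ Finset.Icc 1 N,
      Complex.exp (2 * Real.pi * Complex.I * h * ((lam * α ^ n : ℝ) : ℂ))).im) atTop (nhds 0) := by
    exact (Complex.continuous_im.tendsto 0).comp htend
  -- each term has im = sin(2π μ α^n) ≥ √2/2
  have hterm : ∀ n : ℕ, 1 ≤ n →
      Real.sqrt 2 / 2 ≤ (Complex.exp (2 * Real.pi * Complex.I * h * ((lam * α ^ n : ℝ) : ℂ))).im := by
    intro n hn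
    obtain ⟨m, hm1, hm2⟩ := hαm n hn
    have harg : (2 * (Real.pi : ℂ) * Complex.I * h * ((lam * α ^ n : ℝ) : ℂ)) =
        ((2 * Real.pi * (μ * α ^ n - m) + m * (2 * Real.pi) : ℝ) : ℂ) * Complex.I := by
      rw [← hμlam]; push_cast; ring
    rw [harg, Complex.exp_ofReal_mul_I_im]
    have : Real.sin (2 * Real.pi * (μ * α ^ n - m) + (m : ℝ) * (2 * Real.pi)) =
        Real.sin (2 * Real.pi * (μ * α ^ n - m)) := Real.sin_add_int_mul_two_pi _ m
    rw [this]
    exact sin_bound (by linarith) (by linarith)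
  -- hence the averages have im ≥ √2/2
  have hlower : ∀ N : ℕ, 1 ≤ N →
      Real.sqrt 2 / 2 ≤ ((N : ℂ)⁻¹ * ∑ n ∈ Finset.Icc 1 N,
        Complex.exp (2 * Real.pi * Complex.I * h * ((lam * α ^ n : ℝ) : ℂ))).im := by
    intro N hN
    have hNC : ((N : ℂ))⁻¹ = (((N : ℝ)⁻¹ : ℝ) : ℂ) := by push_cast; ring
    rw [hNC, Complex.im_ofReal_mul, Complex.im_sum]
    have hsum : (N : ℝ) * (Real.sqrt 2 / 2) ≤
        ∑ n ∈ Finset.Icc 1 N, (Complex.exp (2 * Real.pi * Complex.I * h * ((lam * α ^ n : ℝ) : ℂ))).im := by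
      have hcard : (Finset.Icc 1 N).card = N := by
        rw [Nat.card_Icc]; omega
      calc (N : ℝ) * (Real.sqrt 2 / 2)
          = (Finset.Icc 1 N).card • (Real.sqrt 2 / 2) := by
            rw [hcard]; simp [nsmul_eq_mul]
        _ ≤ _ := Finset.card_nsmul_le_sum _ _ _
            (fun n hn => hterm n (Finset.mem_Icc.mp hn).1)
    have hNpos : (0:ℝ) < N := by exact_mod_cast hN
    calc Real.sqrt 2 / 2 = (N:ℝ)⁻¹ * ((N : ℝ) * (Real.sqrt 2 / 2)) := by
          field_simp
      _ ≤ (N:ℝ)⁻¹ * ∑ n ∈ Finset.Icc 1 N,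
            (Complex.exp (2 * Real.pi * Complex.I * h * ((lam * α ^ n : ℝ) : ℂ))).im := by
          apply mul_le_mul_of_nonneg_left hsum (by positivity)
  have hlim : Real.sqrt 2 / 2 ≤ (0:ℝ) :=
    ge_of_tendsto htendim (eventually_atTop.2 ⟨1, fun N hN => hlower N hN⟩)
  have : (0:ℝ) < Real.sqrt 2 / 2 := by positivity
  linarith
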